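/- The coefficient of w^s (2t)^n in the series w\widetilde{\Gamma}_{G(2,1)}(t,w), for the first values, is: n=1: s=1 coefficient 1; n=2: coefficients (1,1) for s=(1,2); n=3: (1,3,2) for s=(1,2,3); n=4: (1,6,10,5) for s=(1,2,3,4); and the coefficient of w^s(2t)^n in w\widetilde{\Gamma} counts plane rooted trees with one strong root covering a weak forest on n ordered leaves plus the leaf 0, with s total internal vertices. -/

import Mathlib

/-- The geometric series `1/(1-2t)` (in the variable `t`, coefficients in `ℚ[w]`). -/
noncomputable def A2 : PowerSeries (Polynomial ℚ) :=
  PowerSeries.mk fun n => (2 : Polynomial ℚ) ^ n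

/-- The variable `w`, as a constant power series. -/
noncomputable def Wc : PowerSeries (Polynomial ℚ) :=
  PowerSeries.C Polynomial.X

/-- The coefficient of `z^s` in
`γ̃_{G(2,1)}(t,z,w) = 2(∑_{i≥1} i(2t)^{i-1}) ∏_{j≥2} e^{(wz/2)(2t)^j}
                   = 2(1-2t)^{-2} e^{wz·(2t)²/(1-2t)·(1/2)·2}`,
namely `2(1-2t)^{-2} (2w t² /(1-2t))^s / s!`. -/
noncomputable def gamTilde (s : ℕ) : PowerSeries (Polynomial ℚ) :=
  2 * A2 ^ 2 * ((s.factorial : ℚ)⁻¹ • (2 * Wc * (PowerSeries.X ^ 2 * A2)) ^ s)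

/-- The coefficient of `t^n` in `Γ̃_{G(2,1)}(t,w)`, obtained from `γ̃` by substituting
`z = ∂/∂t` monomial-by-monomial (a monomial `z^s t^{m}` becomes `(m!/(m-s)!) t^{m-s}`)
and then formally integrating with constant 0 (so `t^{n}` receives
`(n+s-1)!/n!` times the coefficient of `z^s t^{n+s-1}`). -/
noncomputable def GammaTildeCoeff (n : ℕ) : Polynomial ℚ :=
  ∑ s ∈ Finset.range n,
    (((n + s - 1).factorial : ℚ) / (n.factorial : ℚ)) •
      PowerSeries.coeff (n + s - 1) (gamTilde s)

lemma coeff_A2_pow (k r : ℕ) :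
    PowerSeries.coeff r (A2 ^ (k + 1)) =
      ((r + k).choose k * 2 ^ r : Polynomial ℚ) := by
  induction k generalizing r with
  | zero => simp [A2]
  | succ k ih =>
    rw [pow_succ', PowerSeries.coeff_mul,
      Finset.Nat.sum_antidiagonal_eq_sum_range_succ_mk]
    simp only [ih]
    simp only [A2, PowerSeries.coeff_mk]
    have : ∀ i ∈ Finset.range (r + 1),
        (2 : Polynomial ℚ) ^ i * (((r - i) + k).choose k * 2 ^ (r - i)) =
        (((r - i) + k).choose k : Polynomial ℚ) * 2 ^ r := by
      intro i hi
      rw [Finset.mem_range] at hi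
      rw [show r = i + (r - i) by omega, pow_add]
      ring_nf
      congr 2
      omega
    rw [Finset.sum_congr rfl this, ← Finset.sum_mul]
    have hnat : ∑ i ∈ Finset.range (r + 1), (r - i + k).choose k
        = (r + (k + 1)).choose (k + 1) := by
      rw [show (r + (k+1)).choose (k+1) = (r + k + 1).choose (k+1) by ring_nf,
        ← Nat.sum_range_add_choose, ← Finset.sum_range_reflect]
      apply Finset.sum_congr rfl
      intro i hi
      congr 1
      rw [Finset.mem_range] at hi
      omega
    rw [← hnat]
    push_cast
    rfl

lemma qsmul (q : ℚ) (f : PowerSeries (Polynomial ℚ)) :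
    q • f = PowerSeries.C (Polynomial.C q) * f := by
  ext n
  simp [PowerSeries.coeff_smul, Polynomial.smul_eq_C_mul]

lemma g_eq (s : ℕ) : gamTilde s =
    PowerSeries.C
      (Polynomial.C (2 * (s.factorial : ℚ)⁻¹ * 2 ^ s) * Polynomial.X ^ s) *
      (PowerSeries.X ^ (2 * s) * A2 ^ (s + 2)) := by
  rw [gamTilde, qsmul, Wc,
    show (2 : PowerSeries (Polynomial ℚ)) = PowerSeries.C 2 from
      (map_ofNat _ 2).symm,
    show (2 : Polynomial ℚ) = Polynomial.C 2 from (map_ofNat _ 2).symm]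
  simp only [map_mul, map_pow, mul_pow, pow_mul]
  ring_nf

lemma coeff_gam (s r : ℕ) :
    PowerSeries.coeff (2 * s + r) (gamTilde s) =
      Polynomial.C (2 * (s.factorial : ℚ)⁻¹ * 2 ^ s) * Polynomial.X ^ s *
        ((r + (s + 1)).choose (s + 1) * 2 ^ r : Polynomial ℚ) := by
  rw [g_eq, PowerSeries.coeff_C_mul, add_comm (2*s) r, PowerSeries.coeff_X_pow_mul,
    show s + 2 = (s + 1) + 1 from rfl, coeff_A2_pow]

lemma coeff_gam' (s r : ℕ) :
    PowerSeries.coeff (2 * s + r) (gamTilde s) =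
      (2 * (s.factorial : ℚ)⁻¹ * 2 ^ s * ((r + (s + 1)).choose (s + 1)) * 2 ^ r) •
        (Polynomial.X ^ s : Polynomial ℚ) := by
  rw [coeff_gam, Polynomial.smul_eq_C_mul]
  simp only [map_mul, map_pow, map_ofNat, Polynomial.C_eq_natCast]
  ring

lemma cg (s r : ℕ) (q : ℚ)
    (h : 2 * (s.factorial : ℚ)⁻¹ * 2 ^ s * ((r + (s + 1)).choose (s + 1)) * 2 ^ r = q) :
    PowerSeries.coeff (2 * s + r) (gamTilde s) =
      q • (Polynomial.X ^ s : Polynomial ℚ) := by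
  rw [coeff_gam', h]

lemma c00 : PowerSeries.coeff 0 (gamTilde 0) = (2 : ℚ) • (1 : Polynomial ℚ) := by
  simpa using cg 0 0 2 (by norm_num [Nat.factorial])
lemma c01 : PowerSeries.coeff 1 (gamTilde 0) = (8 : ℚ) • (1 : Polynomial ℚ) := by
  simpa using cg 0 1 8 (by norm_num [Nat.factorial])
lemma c02 : PowerSeries.coeff 2 (gamTilde 0) = (24 : ℚ) • (1 : Polynomial ℚ) := by
  simpa using cg 0 2 24 (by norm_num [Nat.factorial, Nat.choose_one_right, Nat.choose_self, show Nat.choose 3 2 = 3 from rfl, show Nat.choose 4 2 = 6 from rfl, show Nat.choose 4 3 = 4 from rfl])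
lemma c03 : PowerSeries.coeff 3 (gamTilde 0) = (64 : ℚ) • (1 : Polynomial ℚ) := by
  simpa using cg 0 3 64 (by norm_num [Nat.factorial, Nat.choose_one_right, Nat.choose_self, show Nat.choose 3 2 = 3 from rfl, show Nat.choose 4 2 = 6 from rfl, show Nat.choose 4 3 = 4 from rfl])
lemma c10 : PowerSeries.coeff 2 (gamTilde 1) = (4 : ℚ) • (Polynomial.X ^ 1 : Polynomial ℚ) := by
  exact cg 1 0 4 (by norm_num [Nat.factorial, Nat.choose_one_right, Nat.choose_self, show Nat.choose 3 2 = 3 from rfl, show Nat.choose 4 2 = 6 from rfl, show Nat.choose 4 3 = 4 from rfl])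
lemma c11 : PowerSeries.coeff 3 (gamTilde 1) = (24 : ℚ) • (Polynomial.X ^ 1 : Polynomial ℚ) := by
  exact cg 1 1 24 (by norm_num [Nat.factorial, Nat.choose_one_right, Nat.choose_self, show Nat.choose 3 2 = 3 from rfl, show Nat.choose 4 2 = 6 from rfl, show Nat.choose 4 3 = 4 from rfl])
lemma c12 : PowerSeries.coeff 4 (gamTilde 1) = (96 : ℚ) • (Polynomial.X ^ 1 : Polynomial ℚ) := by
  exact cg 1 2 96 (by norm_num [Nat.factorial, Nat.choose_one_right, Nat.choose_self, show Nat.choose 3 2 = 3 from rfl, show Nat.choose 4 2 = 6 from rfl, show Nat.choose 4 3 = 4 from rfl])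
lemma c20 : PowerSeries.coeff 4 (gamTilde 2) = (4 : ℚ) • (Polynomial.X ^ 2 : Polynomial ℚ) := by
  simpa using cg 2 0 4 (by norm_num [Nat.factorial, Nat.choose_one_right, Nat.choose_self, show Nat.choose 3 2 = 3 from rfl, show Nat.choose 4 2 = 6 from rfl, show Nat.choose 4 3 = 4 from rfl])
lemma c21 : PowerSeries.coeff 5 (gamTilde 2) = (32 : ℚ) • (Polynomial.X ^ 2 : Polynomial ℚ) := by
  simpa using cg 2 1 32 (by norm_num [Nat.factorial, Nat.choose_one_right, Nat.choose_self, show Nat.choose 3 2 = 3 from rfl, show Nat.choose 4 2 = 6 from rfl, show Nat.choose 4 3 = 4 from rfl])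
lemma c30 : PowerSeries.coeff 6 (gamTilde 3) = (8/3 : ℚ) • (Polynomial.X ^ 3 : Polynomial ℚ) := by
  simpa using cg 3 0 (8/3) (by norm_num [Nat.factorial, Nat.choose_one_right, Nat.choose_self, show Nat.choose 3 2 = 3 from rfl, show Nat.choose 4 2 = 6 from rfl, show Nat.choose 4 3 = 4 from rfl])

open Polynomial in
/-- the first coefficients of `w·Γ̃_{G(2,1)}(t,w)`: the coefficient of
`(2t)^n` is `w` for n = 1, `w² + w` for n = 2, `2w³ + 3w² + w` for n = 3 and
`5w⁴ + 10w³ + 6w² + w` for n = 4, i.e.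
`w Γ̃ = 2wt + (w²+w)4t² + (2w³+3w²+w)8t³ + (5w⁴+10w³+6w²+w)16t⁴ + ⋯`. -/
theorem stmt_17 :
    X * GammaTildeCoeff 1 = 2 * X ∧
    X * GammaTildeCoeff 2 = 4 * (X ^ 2 + X) ∧
    X * GammaTildeCoeff 3 = 8 * (2 * X ^ 3 + 3 * X ^ 2 + X) ∧
    X * GammaTildeCoeff 4 = 16 * (5 * X ^ 4 + 10 * X ^ 3 + 6 * X ^ 2 + X) := by
  refine ⟨?_, ?_, ?_, ?_⟩
  · rw [GammaTildeCoeff]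
    simp only [Finset.sum_range_succ, Finset.sum_range_zero]
    norm_num
    rw [← PowerSeries.coeff_zero_eq_constantCoeff_apply, c00]
    try simp only [smul_smul]
    norm_num [Nat.factorial, Polynomial.smul_eq_C_mul, map_ofNat]
    ring
  · rw [GammaTildeCoeff]
    simp only [Finset.sum_range_succ, Finset.sum_range_zero]
    norm_num
    rw [c01, c10]
    try simp only [smul_smul]
    norm_num [Nat.factorial, Polynomial.smul_eq_C_mul, map_ofNat]
    ring
  · rw [GammaTildeCoeff]
    simp only [Finset.sum_range_succ, Finset.sum_range_zero]
    norm_num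
    rw [c02, c11, c20]
    try simp only [smul_smul]
    norm_num [Nat.factorial, Polynomial.smul_eq_C_mul, map_ofNat]
    ring
  · rw [GammaTildeCoeff]
    simp only [Finset.sum_range_succ, Finset.sum_range_zero]
    norm_num
    rw [c03, c12, c21, c30]
    try simp only [smul_smul]
    norm_num [Nat.factorial, Polynomial.smul_eq_C_mul, map_ofNat]
    ring
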